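/- Let (U, R, 𝓕) be a CF-approximation space. If S*(K, F) ≠ ∅ for every K ∈ 𝓕^♯ and every F ∈ 𝓕 with R̄(K) ⊆ R̄(F), then (𝔠(U, R, 𝓕), ⊆) is an sL-domain. -/

import Mathlib

open Set

/-- The upper approximation operator: `upp R A = {x | ∃ y ∈ A, x R y}`. -/
def upp {U : Type*} (R : U → U → Prop) (A : Set U) : Set U := {x | ∃ y ∈ A, R x y}

/-- `(U, R, 𝓕)` is a CF-approximation space. -/
def IsCFApprox {U : Type*} (R : U → U → Prop) (𝓕 : Set (Set U)) : Prop :=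
  Transitive R ∧ 𝓕.Nonempty ∧ (∀ F ∈ 𝓕, F.Finite) ∧
    ∀ F ∈ 𝓕, ∀ K : Set U, K.Finite → K ⊆ upp R F →
      ∃ G ∈ 𝓕, K ⊆ upp R G ∧ G ⊆ upp R F

/-- `E` is a CF-closed set of `(U, R, 𝓕)`. -/
def CFClosed {U : Type*} (R : U → U → Prop) (𝓕 : Set (Set U)) (E : Set U) : Prop :=
  ∀ K : Set U, K.Finite → K ⊆ E →
    ∃ F ∈ 𝓕, K ⊆ upp R F ∧ upp R F ⊆ E ∧ F ⊆ E

/-- The join saturation `𝓕^♯`: all unions of nonempty finite subfamilies of `𝓕`. -/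
def joinSat {U : Type*} (𝓕 : Set (Set U)) : Set (Set U) :=
  {A | ∃ 𝓐 : Set (Set U), 𝓐 ⊆ 𝓕 ∧ 𝓐.Finite ∧ 𝓐.Nonempty ∧ A = ⋃₀ 𝓐}

/-- `S(M, F)`: the set of `G ∈ 𝓕` satisfying (sL-1) and (sL-2). -/
def SFam {U : Type*} (R : U → U → Prop) (𝓕 : Set (Set U)) (M F : Set U) : Set (Set U) :=
  {G | G ∈ 𝓕 ∧ upp R M ⊆ upp R G ∧ upp R G ⊆ upp R F ∧
    ∀ G' ∈ 𝓕, upp R M ⊆ upp R G' → upp R G' ⊆ upp R F → upp R G ⊆ upp R G'}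

/-- `S*(M, F) = {G ∈ S(M, F) | G ⊆ upp R F}`. -/
def SStar {U : Type*} (R : U → U → Prop) (𝓕 : Set (Set U)) (M F : Set U) : Set (Set U) :=
  {G | G ∈ SFam R 𝓕 M F ∧ G ⊆ upp R F}

/-- sL-approximation space. -/
def IsSLApprox {U : Type*} (R : U → U → Prop) (𝓕 : Set (Set U)) : Prop :=
  IsCFApprox R 𝓕 ∧
    ∀ M ∈ joinSat 𝓕, ∀ F ∈ 𝓕, M ⊆ upp R F → (SFam R 𝓕 M F).Nonempty

/-- L-approximation space. -/
def IsLApprox {U : Type*} (R : U → U → Prop) (𝓕 : Set (Set U)) : Prop :=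
  IsCFApprox R 𝓕 ∧
    ∀ M ∈ joinSat 𝓕 ∪ {(∅ : Set U)}, ∀ F ∈ 𝓕, M ⊆ upp R F → (SFam R 𝓕 M F).Nonempty

/-- bc-approximation space. -/
def IsBCApprox {U : Type*} (R : U → U → Prop) (𝓕 : Set (Set U)) : Prop :=
  IsCFApprox R 𝓕 ∧
    ∀ M ∈ joinSat 𝓕 ∪ {(∅ : Set U)}, ∀ F ∈ 𝓕, M ⊆ upp R F →
      ∃ G ∈ 𝓕, upp R M ⊆ upp R G ∧ upp R G ⊆ upp R F ∧
        ∀ G' ∈ 𝓕, upp R M ⊆ upp R G' → upp R G ⊆ upp R G'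

/-- A dcpo: every (nonempty) directed subset has a supremum. -/
def IsDcpo (P : Type*) [PartialOrder P] : Prop :=
  ∀ D : Set P, D.Nonempty → DirectedOn (· ≤ ·) D → ∃ s, IsLUB D s

/-- The way-below relation `x ≪ y`. -/
def WayBelow {P : Type*} [PartialOrder P] (x y : P) : Prop :=
  ∀ D : Set P, D.Nonempty → DirectedOn (· ≤ ·) D →
    ∀ s, IsLUB D s → y ≤ s → ∃ d ∈ D, x ≤ d

/-- Continuous domain: a dcpo in which for every `x` the set `{z | z ≪ x}` is
directed with supremum `x`. -/
def IsContinuousDomain (P : Type*) [PartialOrder P] : Prop :=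
  IsDcpo P ∧ ∀ x : P, {z | WayBelow z x}.Nonempty ∧
    DirectedOn (· ≤ ·) {z | WayBelow z x} ∧ IsLUB {z | WayBelow z x} x

/-- Algebraic domain: a dcpo in which for every `x` the set `↓x ∩ K(P)` is
directed with supremum `x`. -/
def IsAlgebraicDomain (P : Type*) [PartialOrder P] : Prop :=
  IsDcpo P ∧ ∀ x : P, ({k | k ≤ x ∧ WayBelow k k}).Nonempty ∧
    DirectedOn (· ≤ ·) {k | k ≤ x ∧ WayBelow k k} ∧
    IsLUB {k | k ≤ x ∧ WayBelow k k} x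

/-- sL-domain: a continuous domain in which every principal ideal is a
sup-semilattice. -/
def IsSLDomain (P : Type*) [PartialOrder P] : Prop :=
  IsContinuousDomain P ∧ ∀ x a b : P, a ≤ x → b ≤ x →
    ∃ s, s ≤ x ∧ a ≤ s ∧ b ≤ s ∧ ∀ t, t ≤ x → a ≤ t → b ≤ t → s ≤ t

/-- L-domain: a continuous domain in which every principal ideal is a
complete lattice (every subset of `↓x` has a least upper bound in `↓x`). -/
def IsLDomain (P : Type*) [PartialOrder P] : Prop :=
  IsContinuousDomain P ∧ ∀ (x : P) (A : Set P), (∀ a ∈ A, a ≤ x) →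
    ∃ s, s ≤ x ∧ (∀ a ∈ A, a ≤ s) ∧ ∀ t, t ≤ x → (∀ a ∈ A, a ≤ t) → s ≤ t

/-- bc-domain: a continuous domain in which every up-bounded subset has a
supremum. -/
def IsBCDomain (P : Type*) [PartialOrder P] : Prop :=
  IsContinuousDomain P ∧ ∀ A : Set P, (∃ b, ∀ a ∈ A, a ≤ b) → ∃ s, IsLUB A s


section AuxForStmt8

variable {U : Type*} {R : U → U → Prop} {𝓕 : Set (Set U)}

lemma upp_mono' {A B : Set U} (h : A ⊆ B) : upp R A ⊆ upp R B := by
  rintro x ⟨y, hy, hxy⟩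
  exact ⟨y, h hy, hxy⟩

lemma upp_trans' (hT : Transitive R) {A F : Set U} (h : A ⊆ upp R F) :
    upp R A ⊆ upp R F := by
  rintro x ⟨y, hy, hxy⟩
  obtain ⟨z, hz, hyz⟩ := h hy
  exact ⟨z, hz, hT hxy hyz⟩

lemma finite_subset_sUnion_directed' {D : Set (Set U)} (hne : D.Nonempty)
    (hdir : DirectedOn (· ⊆ ·) D) {K : Set U} (hK : K.Finite) :
    K ⊆ ⋃₀ D → ∃ d ∈ D, K ⊆ d := by
  refine Set.Finite.induction_on _ hK (fun _ => ⟨hne.choose, hne.choose_spec, empty_subset _⟩) ?_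
  intro x K hx hKf ih hsub
  obtain ⟨d, hd, hKd⟩ := ih ((subset_insert _ _).trans hsub)
  obtain ⟨e, he, hxe⟩ := hsub (mem_insert _ _)
  obtain ⟨f, hf, hdf, hef⟩ := hdir d hd e he
  exact ⟨f, hf, insert_subset (hef hxe) (hKd.trans hdf)⟩

lemma cfclosed_upp' (hCF : IsCFApprox R 𝓕) {F : Set U} (hF : F ∈ 𝓕) :
    CFClosed R 𝓕 (upp R F) := by
  intro K hKfin hKsub
  obtain ⟨G, hG, hKG, hGF⟩ := hCF.2.2.2 F hF K hKfin hKsub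
  exact ⟨G, hG, hKG, upp_trans' hCF.1 hGF, hGF⟩

lemma cfclosed_sUnion' {D : Set (Set U)} (hne : D.Nonempty)
    (hdir : DirectedOn (· ⊆ ·) D) (hcl : ∀ d ∈ D, CFClosed R 𝓕 d) :
    CFClosed R 𝓕 (⋃₀ D) := by
  intro K hKfin hKsub
  obtain ⟨d, hd, hKd⟩ := finite_subset_sUnion_directed' hne hdir hKfin hKsub
  obtain ⟨F, hF, h1, h2, h3⟩ := hcl d hd K hKfin hKd
  exact ⟨F, hF, h1, h2.trans (subset_sUnion_of_mem hd), h3.trans (subset_sUnion_of_mem hd)⟩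

lemma image_directed' {D : Set {E : Set U // CFClosed R 𝓕 E}}
    (hdir : DirectedOn (· ≤ ·) D) : DirectedOn (· ⊆ ·) (Subtype.val '' D) := by
  rintro _ ⟨d, hd, rfl⟩ _ ⟨e, he, rfl⟩
  obtain ⟨f, hf, hdf, hef⟩ := hdir d hd e he
  exact ⟨f.val, ⟨f, hf, rfl⟩, hdf, hef⟩

lemma dcpo_lub' {D : Set {E : Set U // CFClosed R 𝓕 E}} (hne : D.Nonempty)
    (hdir : DirectedOn (· ≤ ·) D) :
    ∃ hcl : CFClosed R 𝓕 (⋃₀ (Subtype.val '' D)),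
      IsLUB D ⟨⋃₀ (Subtype.val '' D), hcl⟩ := by
  have hcl : CFClosed R 𝓕 (⋃₀ (Subtype.val '' D)) :=
    cfclosed_sUnion' (hne.image _) (image_directed' hdir)
      (by rintro _ ⟨d, hd, rfl⟩; exact d.2)
  refine ⟨hcl, ?_, ?_⟩
  · intro d hd
    show d.val ⊆ ⋃₀ (Subtype.val '' D)
    exact subset_sUnion_of_mem ⟨d, hd, rfl⟩
  · intro t ht
    show ⋃₀ (Subtype.val '' D) ⊆ t.val
    refine sUnion_subset ?_
    rintro _ ⟨d, hd, rfl⟩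
    exact ht hd

lemma waybelow_upp' (hCF : IsCFApprox R 𝓕) {F E : Set U} (hF : F ∈ 𝓕)
    (hFE : F ⊆ E) (hE : CFClosed R 𝓕 E) :
    WayBelow (⟨upp R F, cfclosed_upp' hCF hF⟩ : {E : Set U // CFClosed R 𝓕 E}) ⟨E, hE⟩ := by
  intro D hne hdir s hs hEs
  obtain ⟨hcl, hlub⟩ := dcpo_lub' hne hdir
  have hseq : s = ⟨_, hcl⟩ := hs.unique hlub
  have hFs : F ⊆ ⋃₀ (Subtype.val '' D) := by
    have h1 : E ⊆ s.val := hEs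
    rw [hseq] at h1
    exact hFE.trans h1
  obtain ⟨_, ⟨d, hd, rfl⟩, hFd⟩ :=
    finite_subset_sUnion_directed' (hne.image _) (image_directed' hdir)
      (hCF.2.2.1 F hF) hFs
  obtain ⟨H, hH, hFH, hHd, -⟩ := d.2 F (hCF.2.2.1 F hF) hFd
  refine ⟨d, hd, ?_⟩
  show upp R F ⊆ d.val
  exact (upp_trans' hCF.1 hFH).trans hHd

lemma DE_spec' (hCF : IsCFApprox R 𝓕) {E : Set U} (hE : CFClosed R 𝓕 E) :
    ({z : {E : Set U // CFClosed R 𝓕 E} |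
        ∃ F ∈ 𝓕, F ⊆ E ∧ z.val = upp R F ∧ upp R F ⊆ E}).Nonempty ∧
    DirectedOn (· ≤ ·)
      {z : {E : Set U // CFClosed R 𝓕 E} |
        ∃ F ∈ 𝓕, F ⊆ E ∧ z.val = upp R F ∧ upp R F ⊆ E} ∧
    IsLUB {z : {E : Set U // CFClosed R 𝓕 E} |
        ∃ F ∈ 𝓕, F ⊆ E ∧ z.val = upp R F ∧ upp R F ⊆ E} ⟨E, hE⟩ := by
  have hT := hCF.1
  have hfin := hCF.2.2.1
  refine ⟨?_, ?_, ?_, ?_⟩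
  · obtain ⟨F, hF, -, h2, h3⟩ := hE ∅ finite_empty (empty_subset E)
    exact ⟨⟨upp R F, cfclosed_upp' hCF hF⟩, F, hF, h3, rfl, h2⟩
  · rintro z1 ⟨F1, hF1, hF1E, hz1, -⟩ z2 ⟨F2, hF2, hF2E, hz2, -⟩
    obtain ⟨F3, hF3, hsub3, hu3E, hF3E⟩ :=
      hE (F1 ∪ F2) ((hfin F1 hF1).union (hfin F2 hF2)) (union_subset hF1E hF2E)
    refine ⟨⟨upp R F3, cfclosed_upp' hCF hF3⟩, ⟨F3, hF3, hF3E, rfl, hu3E⟩, ?_, ?_⟩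
    · show z1.val ⊆ upp R F3
      rw [hz1]
      exact upp_trans' hT (subset_union_left.trans hsub3)
    · show z2.val ⊆ upp R F3
      rw [hz2]
      exact upp_trans' hT (subset_union_right.trans hsub3)
  · rintro z ⟨F, hF, hFE, hz, hu⟩
    show z.val ⊆ E
    rw [hz]; exact hu
  · intro t ht
    show E ⊆ t.val
    intro x0 hx0
    obtain ⟨F, hF, hxF, huE, hFE⟩ :=
      hE {x0} (finite_singleton _) (singleton_subset_iff.mpr hx0)
    have h := ht (a := ⟨upp R F, cfclosed_upp' hCF hF⟩) ⟨F, hF, hFE, rfl, huE⟩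
    exact h (hxF rfl)

lemma window_eq' {K F F' G G' : Set U} (hwin : upp R F ⊆ upp R F')
    (hG : G ∈ SFam R 𝓕 K F) (hG' : G' ∈ SFam R 𝓕 K F') :
    upp R G = upp R G' := by
  obtain ⟨hGm, hKG, hGF, hGmin⟩ := hG
  obtain ⟨hG'm, hKG', hG'F', hG'min⟩ := hG'
  have h1 : upp R G' ⊆ upp R G := hG'min G hGm hKG (hGF.trans hwin)
  exact subset_antisymm (hGmin G' hG'm hKG' (h1.trans hGF)) h1

lemma getG' (hS : ∀ K ∈ joinSat 𝓕, ∀ F ∈ 𝓕, upp R K ⊆ upp R F →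
      (SStar R 𝓕 K F).Nonempty)
    {Fa Fb F : Set U} (hFa : Fa ∈ 𝓕) (hFb : Fb ∈ 𝓕) (hF : F ∈ 𝓕)
    (h : upp R (Fa ∪ Fb) ⊆ upp R F) : (SStar R 𝓕 (Fa ∪ Fb) F).Nonempty :=
  hS _ ⟨{Fa, Fb}, by simp [insert_subset_iff, hFa, hFb],
    (finite_singleton _).insert _, ⟨Fa, by simp⟩, (Set.sUnion_pair _ _).symm⟩ F hF h

lemma key' (hS : ∀ K ∈ joinSat 𝓕, ∀ F ∈ 𝓕, upp R K ⊆ upp R F →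
      (SStar R 𝓕 K F).Nonempty)
    {Fa Fb F F'' G H : Set U} (hFa : Fa ∈ 𝓕) (hFb : Fb ∈ 𝓕) (hF'' : F'' ∈ 𝓕)
    (hG : G ∈ SFam R 𝓕 (Fa ∪ Fb) F)
    (hwin : upp R F ⊆ upp R F'')
    (hH : H ∈ 𝓕) (hKH : upp R (Fa ∪ Fb) ⊆ upp R H) (hHF'' : upp R H ⊆ upp R F'') :
    upp R G ⊆ upp R H := by
  obtain ⟨G1, hG1⟩ := getG' hS hFa hFb hF'' (hKH.trans hHF'')
  rw [window_eq' hwin hG hG1.1]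
  exact hG1.1.2.2.2 H hH hKH hHF''

end AuxForStmt8

/-- if `S*(K, F) ≠ ∅` for all `K ∈ 𝓕^♯` and `F ∈ 𝓕` with
`upp R K ⊆ upp R F`, then `(𝔠(U, R, 𝓕), ⊆)` is an sL-domain. -/
theorem stmt8 {U : Type*} (R : U → U → Prop) (𝓕 : Set (Set U))
    (hCF : IsCFApprox R 𝓕)
    (hS : ∀ K ∈ joinSat 𝓕, ∀ F ∈ 𝓕, upp R K ⊆ upp R F →
      (SStar R 𝓕 K F).Nonempty) :
    IsSLDomain {E : Set U // CFClosed R 𝓕 E} := by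
  have hT := hCF.1
  have hfin := hCF.2.2.1
  refine ⟨⟨?_, ?_⟩, ?_⟩
  · -- dcpo
    intro D hne hdir
    obtain ⟨hcl, hlub⟩ := dcpo_lub' hne hdir
    exact ⟨_, hlub⟩
  · -- continuity
    intro x
    obtain ⟨hDEne, hDEdir, hDElub⟩ := DE_spec' hCF x.2
    have hDEW : ∀ z ∈ {z : {E : Set U // CFClosed R 𝓕 E} |
        ∃ F ∈ 𝓕, F ⊆ x.val ∧ z.val = upp R F ∧ upp R F ⊆ x.val},
        WayBelow z x := by
      rintro z ⟨F, hF, hFE, hz, -⟩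
      have h := waybelow_upp' hCF hF hFE x.2
      have hzeq : z = ⟨upp R F, cfclosed_upp' hCF hF⟩ := Subtype.ext hz
      rw [hzeq]
      exact h
    refine ⟨?_, ?_, ?_, ?_⟩
    · obtain ⟨z, hz⟩ := hDEne
      exact ⟨z, hDEW z hz⟩
    · intro z1 hz1 z2 hz2
      obtain ⟨d1, hd1, hzd1⟩ := hz1 _ hDEne hDEdir _ hDElub (le_refl x)
      obtain ⟨d2, hd2, hzd2⟩ := hz2 _ hDEne hDEdir _ hDElub (le_refl x)
      obtain ⟨d3, hd3, h13, h23⟩ := hDEdir d1 hd1 d2 hd2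
      exact ⟨d3, hDEW d3 hd3, hzd1.trans h13, hzd2.trans h23⟩
    · intro z hz
      obtain ⟨d, hd, hzd⟩ := hz {x} ⟨x, rfl⟩
        (directedOn_singleton x)
        x isLUB_singleton (le_refl x)
      rw [mem_singleton_iff] at hd
      exact hd ▸ hzd
    · intro t ht
      exact hDElub.2 (fun d hd => ht (hDEW d hd))
  · -- sL part
    intro x a b hax hbx
    set D' : Set (Set U) := {S | ∃ Fa Fb F G : Set U,
      Fa ∈ 𝓕 ∧ Fa ⊆ a.val ∧ Fb ∈ 𝓕 ∧ Fb ⊆ b.val ∧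
      F ∈ 𝓕 ∧ F ⊆ x.val ∧ upp R F ⊆ x.val ∧
      Fa ∪ Fb ⊆ upp R F ∧ G ∈ SStar R 𝓕 (Fa ∪ Fb) F ∧ S = upp R G} with hD'def
    have mk : ∀ Fa, Fa ∈ 𝓕 → Fa ⊆ a.val → ∀ Fb, Fb ∈ 𝓕 → Fb ⊆ b.val →
        ∃ G, upp R G ∈ D' ∧ upp R (Fa ∪ Fb) ⊆ upp R G := by
      intro Fa hFa hFaa Fb hFb hFbb
      have hKx : Fa ∪ Fb ⊆ x.val := union_subset (hFaa.trans hax) (hFbb.trans hbx)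
      obtain ⟨F, hF, hKF, huFx, hFx⟩ :=
        x.2 (Fa ∪ Fb) ((hfin _ hFa).union (hfin _ hFb)) hKx
      obtain ⟨G, hG⟩ := getG' hS hFa hFb hF (upp_trans' hT hKF)
      exact ⟨G, ⟨Fa, Fb, F, G, hFa, hFaa, hFb, hFbb, hF, hFx, huFx, hKF, hG, rfl⟩,
        hG.1.2.1⟩
    obtain ⟨Fa0, hFa0, -, -, hFa0a⟩ := a.2 ∅ finite_empty (empty_subset _)
    obtain ⟨Fb0, hFb0, -, -, hFb0b⟩ := b.2 ∅ finite_empty (empty_subset _)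
    have hneD' : D'.Nonempty := by
      obtain ⟨G, hGD, -⟩ := mk Fa0 hFa0 hFa0a Fb0 hFb0 hFb0b
      exact ⟨_, hGD⟩
    have hdirD' : DirectedOn (· ⊆ ·) D' := by
      rintro _ ⟨Fa, Fb, F, G, hFa, hFaa, hFb, hFbb, hF, hFx, huFx, hKF, hG, rfl⟩
             _ ⟨Fa', Fb', F', G', hFa', hFaa', hFb', hFbb', hF', hFx', huFx', hKF', hG', rfl⟩
      obtain ⟨Fa'', hFa'', hKa, -, hFa''a⟩ :=
        a.2 (Fa ∪ Fa') ((hfin _ hFa).union (hfin _ hFa')) (union_subset hFaa hFaa')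
      obtain ⟨Fb'', hFb'', hKb, -, hFb''b⟩ :=
        b.2 (Fb ∪ Fb') ((hfin _ hFb).union (hfin _ hFb')) (union_subset hFbb hFbb')
      have hbig : Fa'' ∪ Fb'' ∪ F ∪ F' ⊆ x.val :=
        union_subset (union_subset (union_subset (hFa''a.trans hax) (hFb''b.trans hbx))
          hFx) hFx'
      obtain ⟨F'', hF'', hKF'', huF''x, hF''x⟩ :=
        x.2 _ ((((hfin _ hFa'').union (hfin _ hFb'')).union (hfin _ hF)).union
          (hfin _ hF')) hbig
      have hK''F'' : Fa'' ∪ Fb'' ⊆ upp R F'' :=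
        (subset_union_left.trans subset_union_left).trans hKF''
      obtain ⟨G'', hG''⟩ := getG' hS hFa'' hFb'' hF'' (upp_trans' hT hK''F'')
      have hwin : upp R F ⊆ upp R F'' :=
        upp_trans' hT ((subset_union_right.trans subset_union_left).trans hKF'')
      have hwin' : upp R F' ⊆ upp R F'' :=
        upp_trans' hT (subset_union_right.trans hKF'')
      have hKab : upp R (Fa ∪ Fb) ⊆ upp R G'' := by
        have h1 : Fa ∪ Fb ⊆ upp R (Fa'' ∪ Fb'') :=
          union_subset
            ((subset_union_left.trans hKa).trans (upp_mono' subset_union_left))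
            ((subset_union_left.trans hKb).trans (upp_mono' subset_union_right))
        exact (upp_trans' hT h1).trans hG''.1.2.1
      have hKab' : upp R (Fa' ∪ Fb') ⊆ upp R G'' := by
        have h1 : Fa' ∪ Fb' ⊆ upp R (Fa'' ∪ Fb'') :=
          union_subset
            ((subset_union_right.trans hKa).trans (upp_mono' subset_union_left))
            ((subset_union_right.trans hKb).trans (upp_mono' subset_union_right))
        exact (upp_trans' hT h1).trans hG''.1.2.1
      refine ⟨upp R G'', ⟨Fa'', Fb'', F'', G'', hFa'', hFa''a, hFb'', hFb''b, hF'',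
        hF''x, huF''x, hK''F'', hG'', rfl⟩, ?_, ?_⟩
      · exact key' hS hFa hFb hF'' hG.1 hwin hG''.1.1 hKab hG''.1.2.2.1
      · exact key' hS hFa' hFb' hF'' hG'.1 hwin' hG''.1.1 hKab' hG''.1.2.2.1
    have hclD' : ∀ d ∈ D', CFClosed R 𝓕 d := by
      rintro _ ⟨Fa, Fb, F, G, hFa, hFaa, hFb, hFbb, hF, hFx, huFx, hKF, hG, rfl⟩
      exact cfclosed_upp' hCF hG.1.1
    have hs0 : CFClosed R 𝓕 (⋃₀ D') := cfclosed_sUnion' hneD' hdirD' hclD'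
    refine ⟨⟨⋃₀ D', hs0⟩, ?_, ?_, ?_, ?_⟩
    · show ⋃₀ D' ⊆ x.val
      refine sUnion_subset ?_
      rintro _ ⟨Fa, Fb, F, G, hFa, hFaa, hFb, hFbb, hF, hFx, huFx, hKF, hG, rfl⟩
      exact hG.1.2.2.1.trans huFx
    · show a.val ⊆ ⋃₀ D'
      intro x0 hx0
      obtain ⟨Fa, hFa, hxFa, -, hFaa⟩ :=
        a.2 {x0} (finite_singleton _) (singleton_subset_iff.mpr hx0)
      obtain ⟨G, hGD, hKG⟩ := mk Fa hFa hFaa Fb0 hFb0 hFb0b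
      exact ⟨upp R G, hGD, hKG (upp_mono' subset_union_left (hxFa rfl))⟩
    · show b.val ⊆ ⋃₀ D'
      intro x0 hx0
      obtain ⟨Fb, hFb, hxFb, -, hFbb⟩ :=
        b.2 {x0} (finite_singleton _) (singleton_subset_iff.mpr hx0)
      obtain ⟨G, hGD, hKG⟩ := mk Fa0 hFa0 hFa0a Fb hFb hFbb
      exact ⟨upp R G, hGD, hKG (upp_mono' subset_union_right (hxFb rfl))⟩
    · intro t htx hat hbt
      show ⋃₀ D' ⊆ t.val
      refine sUnion_subset ?_
      rintro _ ⟨Fa, Fb, F, G, hFa, hFaa, hFb, hFbb, hF, hFx, huFx, hKF, hG, rfl⟩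
      obtain ⟨H, hH, hKH, huHt, hHt⟩ :=
        t.2 (Fa ∪ Fb) ((hfin _ hFa).union (hfin _ hFb))
          (union_subset (hFaa.trans hat) (hFbb.trans hbt))
      obtain ⟨F', hF', hFHF', huF'x, -⟩ :=
        x.2 (F ∪ H) ((hfin _ hF).union (hfin _ hH))
          (union_subset hFx (hHt.trans htx))
      have hGH : upp R G ⊆ upp R H :=
        key' hS hFa hFb hF' hG.1
          (upp_trans' hT (subset_union_left.trans hFHF'))
          hH (upp_trans' hT hKH)
          (upp_trans' hT (subset_union_right.trans hFHF'))
      exact hGH.trans huHt
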